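/- Let Z ~ N(δ, 1) and Y = (max(Z, −Z/k))². Then for y > 0 the density of Y is f_Y(y) = (1/(2√y))·(φ(√y − δ) + k·φ(k√y + δ)), where φ is the standard normal density. -/

import Mathlib

open MeasureTheory ProbabilityTheory

open Set Real in
private lemma lintegral_image_eq_abs_deriv' {s : Set ℝ} {f f' : ℝ → ℝ} (hs : MeasurableSet s)
    (hf' : ∀ x ∈ s, HasDerivWithinAt f (f' x) s x) (hf : Set.InjOn f s) (g : ℝ → ENNReal) :
    ∫⁻ x in f '' s, g x = ∫⁻ x in s, ENNReal.ofReal |f' x| * g (f x) := by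
  simpa only [ContinuousLinearMap.det_toSpanSingleton] using
    MeasureTheory.lintegral_image_eq_lintegral_abs_det_fderiv_mul volume hs
      (fun x hx => (hf' x hx).hasFDerivWithinAt) hf g

open Set Real in
private lemma stmt_18_key (δ k : ℝ) (hk : k > 1) (t : ℝ) (ht : 0 ≤ t) :
    (gaussianReal δ 1) ((fun z => (max z (-z / k)) ^ 2) ⁻¹' Iic t)
      = ∫⁻ y in Iic t, ENNReal.ofReal
        (if 0 < y then
          (1 / (2 * Real.sqrt y)) *
            ((Real.exp (-(Real.sqrt y - δ) ^ 2 / 2) / Real.sqrt (2 * Real.pi)) +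
              k * (Real.exp (-(k * Real.sqrt y + δ) ^ 2 / 2) / Real.sqrt (2 * Real.pi)))
         else 0) := by
  have hk0 : (0:ℝ) < k := by linarith
  set s := Real.sqrt t with hs
  have hs0 : 0 ≤ s := Real.sqrt_nonneg t
  have hpdf : ∀ x : ℝ, gaussianPDF δ 1 x
      = ENNReal.ofReal (Real.exp (-(x - δ) ^ 2 / 2) / Real.sqrt (2 * Real.pi)) := by
    intro x
    rw [gaussianPDF]
    congr 1
    rw [gaussianPDFReal]
    push_cast
    rw [mul_one, mul_one, div_eq_inv_mul]
    ring_nf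
  -- preimage
  have hpre : (fun z : ℝ => (max z (-z / k)) ^ 2) ⁻¹' Iic t = Icc (-(k * s)) s := by
    ext z
    have hmax : 0 ≤ max z (-z / k) := by
      rcases le_total 0 z with h | h
      · exact le_max_of_le_left h
      · exact le_max_of_le_right (div_nonneg (neg_nonneg.2 h) hk0.le)
    simp only [mem_preimage, mem_Iic, mem_Icc]
    rw [← Real.le_sqrt hmax ht, ← hs, max_le_iff, div_le_iff₀ hk0]
    constructor
    · rintro ⟨h1, h2⟩; exact ⟨by linarith, h1⟩
    · rintro ⟨h1, h2⟩; exact ⟨h2, by linarith⟩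
  rw [hpre, gaussianReal_apply δ (by norm_num) _]
  -- RHS: reduce to Ioc 0 t
  rw [← Set.Iic_union_Ioc_eq_Iic ht, lintegral_union measurableSet_Ioc
    (Set.Iic_disjoint_Ioc le_rfl)]
  have h0 : ∫⁻ y in Iic (0:ℝ), ENNReal.ofReal
      (if 0 < y then
        (1 / (2 * Real.sqrt y)) *
          ((Real.exp (-(Real.sqrt y - δ) ^ 2 / 2) / Real.sqrt (2 * Real.pi)) +
            k * (Real.exp (-(k * Real.sqrt y + δ) ^ 2 / 2) / Real.sqrt (2 * Real.pi)))
       else 0) = 0 := by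
    rw [setLIntegral_congr_fun measurableSet_Iic (g := fun _ => 0)
      ((fun y hy => by
        simp only [mem_Iic] at hy
        rw [if_neg (by linarith), ENNReal.ofReal_zero])), lintegral_zero]
  rw [h0, zero_add]
  -- change of variables y = x^2 on Ioc 0 s
  have himg : Set.Ioc (0:ℝ) t = (fun x : ℝ => x ^ 2) '' Set.Ioc 0 s := by
    ext y
    constructor
    · rintro ⟨hy0, hyt⟩
      exact ⟨Real.sqrt y, ⟨Real.sqrt_pos.2 hy0, Real.sqrt_le_sqrt hyt⟩, Real.sq_sqrt hy0.le⟩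
    · rintro ⟨x, ⟨hx0, hxs⟩, rfl⟩
      exact ⟨by positivity, by
        calc x ^ 2 ≤ s ^ 2 := by nlinarith
        _ = t := Real.sq_sqrt ht⟩
  rw [himg, lintegral_image_eq_abs_deriv' measurableSet_Ioc
    (f' := fun x => 2 * x)
    (fun x _ => by simpa using (hasDerivAt_pow 2 x).hasDerivWithinAt)
    (fun a ha b hb hab => (pow_left_inj₀ ha.1.le hb.1.le two_ne_zero).1 hab)]
  -- simplify integrand
  have hcongr : ∫⁻ x in Set.Ioc (0:ℝ) s, ENNReal.ofReal |2 * x| * ENNReal.ofReal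
      (if 0 < x ^ 2 then
        (1 / (2 * Real.sqrt (x ^ 2))) *
          ((Real.exp (-(Real.sqrt (x ^ 2) - δ) ^ 2 / 2) / Real.sqrt (2 * Real.pi)) +
            k * (Real.exp (-(k * Real.sqrt (x ^ 2) + δ) ^ 2 / 2) / Real.sqrt (2 * Real.pi)))
       else 0)
      = ∫⁻ x in Set.Ioc (0:ℝ) s,
        (ENNReal.ofReal (Real.exp (-(x - δ) ^ 2 / 2) / Real.sqrt (2 * Real.pi))
          + ENNReal.ofReal (k * (Real.exp (-(k * x + δ) ^ 2 / 2) / Real.sqrt (2 * Real.pi)))) := by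
    refine setLIntegral_congr_fun measurableSet_Ioc (fun x hx => ?_)
    obtain ⟨hx0, hxs⟩ := hx
    rw [if_pos (by positivity), Real.sqrt_sq hx0.le, abs_of_pos (by positivity),
      ← ENNReal.ofReal_mul (by positivity), ← ENNReal.ofReal_add (by positivity) (by positivity)]
    congr 1
    field_simp
  rw [hcongr, lintegral_add_left (by fun_prop)]
  -- second integral: substitute x = -u/k
  have himg2 : Set.Ioc (0:ℝ) s = (fun u : ℝ => -u / k) '' Set.Ico (-(k * s)) 0 := by
    ext y
    constructor
    · rintro ⟨hy0, hys⟩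
      refine ⟨-(k * y), ⟨by nlinarith, by nlinarith⟩, by field_simp⟩
    · rintro ⟨u, ⟨hu1, hu2⟩, rfl⟩
      refine ⟨div_pos (by linarith) hk0, ?_⟩
      rw [div_le_iff₀ hk0]; nlinarith
  have hsub : ∫⁻ x in Set.Ioc (0:ℝ) s,
      ENNReal.ofReal (k * (Real.exp (-(k * x + δ) ^ 2 / 2) / Real.sqrt (2 * Real.pi)))
      = ∫⁻ u in Set.Ico (-(k * s)) 0,
        ENNReal.ofReal (Real.exp (-(u - δ) ^ 2 / 2) / Real.sqrt (2 * Real.pi)) := by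
    rw [himg2, lintegral_image_eq_abs_deriv' measurableSet_Ico
      (f' := fun _ => -1 / k)
      (fun u _ => by
        simpa using (((hasDerivAt_id u).neg).div_const k).hasDerivWithinAt)
      (fun a _ b _ hab => by
        field_simp at hab
        exact neg_inj.1 hab)]
    refine setLIntegral_congr_fun measurableSet_Ico (fun u hu => ?_)
    rw [← ENNReal.ofReal_mul (abs_nonneg _)]
    congr 1
    have h1 : k * (-u / k) + δ = -(u - δ) := by field_simp; ring
    rw [h1, neg_sq, abs_div, abs_neg, abs_one, abs_of_pos hk0]
    field_simp
  rw [hsub]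
  -- combine
  have hsplit : Set.Icc (-(k * s)) s = Set.Ico (-(k * s)) 0 ∪ Set.Icc 0 s :=
    (Set.Ico_union_Icc_eq_Icc (by nlinarith) hs0).symm
  have hdisj : Disjoint (Set.Ico (-(k * s)) 0) (Set.Icc (0:ℝ) s) := by
    rw [Set.disjoint_left]
    rintro x ⟨_, h1⟩ ⟨h2, _⟩
    exact absurd h2 (not_le.2 h1)
  simp only [hpdf]
  rw [hsplit, lintegral_union measurableSet_Icc hdisj, add_comm,
    show (∫⁻ x in Set.Ioc (0:ℝ) s,
        ENNReal.ofReal (Real.exp (-(x - δ) ^ 2 / 2) / Real.sqrt (2 * Real.pi)))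
      = ∫⁻ x in Set.Icc (0:ℝ) s,
        ENNReal.ofReal (Real.exp (-(x - δ) ^ 2 / 2) / Real.sqrt (2 * Real.pi))
      from setLIntegral_congr Ioc_ae_eq_Icc]

theorem stmt_18 (δ k : ℝ) (hk : k > 1)
    {Ω : Type*} [MeasureSpace Ω] (P : Measure Ω) [IsProbabilityMeasure P]
    (Z : Ω → ℝ) (hZ : Measure.map Z P = gaussianReal δ 1) :
    Measure.map (fun ω => (max (Z ω) (-(Z ω) / k)) ^ 2) P =
      volume.withDensity (fun y => ENNReal.ofReal
        (if 0 < y then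
          (1 / (2 * Real.sqrt y)) *
            ((Real.exp (-(Real.sqrt y - δ) ^ 2 / 2) / Real.sqrt (2 * Real.pi)) +
              k * (Real.exp (-(k * Real.sqrt y + δ) ^ 2 / 2) / Real.sqrt (2 * Real.pi)))
         else 0)) := by
  have hk0 : (0:ℝ) < k := by linarith
  have hZm : AEMeasurable Z P := aemeasurable_of_map_neZero (by rw [hZ]; infer_instance)
  set g : ℝ → ℝ := fun z => (max z (-z / k)) ^ 2 with hg
  have hgm : Measurable g :=
    ((measurable_id.max (measurable_id.neg.div_const k)).pow_const 2)
  have hmap : Measure.map (fun ω => (max (Z ω) (-(Z ω) / k)) ^ 2) P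
      = Measure.map g (gaussianReal δ 1) := by
    rw [← hZ]
    exact (AEMeasurable.map_map_of_aemeasurable hgm.aemeasurable hZm).symm
  rw [hmap]
  haveI : IsProbabilityMeasure (Measure.map g (gaussianReal δ 1)) :=
    Measure.isProbabilityMeasure_map hgm.aemeasurable
  refine Measure.ext_of_Iic _ _ (fun t => ?_)
  rw [Measure.map_apply hgm measurableSet_Iic, withDensity_apply _ measurableSet_Iic]
  rcases le_or_gt 0 t with ht | ht
  · exact stmt_18_key δ k hk t ht
  · have hpre : g ⁻¹' Set.Iic t = ∅ := by
      ext z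
      simp only [hg, Set.mem_preimage, Set.mem_Iic, Set.mem_empty_iff_false, iff_false, not_le]
      calc t < 0 := ht
        _ ≤ _ := sq_nonneg _
    rw [hpre, measure_empty,
      setLIntegral_congr_fun measurableSet_Iic (g := fun _ => 0)
        ((fun y hy => by
          simp only [Set.mem_Iic] at hy
          rw [if_neg (by linarith), ENNReal.ofReal_zero])), lintegral_zero]
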